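/- arXiv:math/0407096 — 2 statements merged into one kernel-verified Lean document; each statement's English description precedes it below -/
import Mathlib

section
/- Let G be a group containing elements a_i, c_i (i ≥ 1) satisfying all relations of R_ac, and set s_i = c_i·a_i⁻¹·c_{i+1}⁻¹. Then the following relations of R_acs all hold in G: a_i·x_{j−1} = x_j·a_i and s_i·x_j = x_j·s_i for j ≥ i+2 and x ∈ {a, c, s}; s_i·s_{i+1}·a_i = a_{i+1}·s_i and s_{i+1}·s_i·a_{i+1} = a_i·s_i; and s_i·x_{i+1}·s_i = x_{i+1}·s_i·x_{i+1} for x ∈ {s, c}. Furthermore, if in addition c_i² = 1 holds for all i, then s_i² = 1 holds for all i. -/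
private lemma comm3' {G : Type*} [Group G] (x p q r t w : G)
    (h1 : x * p = q * x) (h2 : x * r = t * x) (h3 : x * t = w * x) :
    x * (r * p⁻¹ * t⁻¹) = t * q⁻¹ * w⁻¹ * x := by
    calc x * (r * p⁻¹ * t⁻¹) 
      _ = t * x * r⁻¹ * x⁻¹ * (x * r) * (x⁻¹ * t⁻¹ * x * r * p⁻¹ * t⁻¹) := by group
      _ = t * x * r⁻¹ * x⁻¹ * (t * x) * (x⁻¹ * t⁻¹ * x * r * p⁻¹ * t⁻¹) := by rw [h2]
      _ = t * q⁻¹ * (q * x) * (p⁻¹ * t⁻¹) := by group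
      _ = t * q⁻¹ * (x * p) * (p⁻¹ * t⁻¹) := by rw [h1]
      _ = t * q⁻¹ * w⁻¹ * (w * x) * (t⁻¹) := by group
      _ = t * q⁻¹ * w⁻¹ * (x * t) * (t⁻¹) := by rw [h3]
      _ = t * q⁻¹ * w⁻¹ * x := by group

private lemma comm2' {G : Type*} [Group G] (t p q w : G)
    (h1 : t * p = p * t) (h2 : t * q = q * t) (h3 : t * w = w * t) :
    t * (q * p⁻¹ * w⁻¹) = q * p⁻¹ * w⁻¹ * t := by
    calc t * (q * p⁻¹ * w⁻¹) 
      _ = q * t * q⁻¹ * t⁻¹ * (t * q) * (t⁻¹ * q⁻¹ * t * q * p⁻¹ * w⁻¹) := by group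
      _ = q * t * q⁻¹ * t⁻¹ * (q * t) * (t⁻¹ * q⁻¹ * t * q * p⁻¹ * w⁻¹) := by rw [h2]
      _ = q * p⁻¹ * (p * t) * (p⁻¹ * w⁻¹) := by group
      _ = q * p⁻¹ * (t * p) * (p⁻¹ * w⁻¹) := by rw [h1]
      _ = q * p⁻¹ * w⁻¹ * (w * t) * (w⁻¹) := by group
      _ = q * p⁻¹ * w⁻¹ * (t * w) * (w⁻¹) := by rw [h3]
      _ = q * p⁻¹ * w⁻¹ * t := by group

private lemma torsionAux {G : Type*} [Group G] (a c d : G)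
    (R9 : a * c * d * a = d * c) (hc : c * c = 1) (hd : d * d = 1) :
    c * a⁻¹ * d⁻¹ * (c * a⁻¹ * d⁻¹) = 1 := by
    calc c * a⁻¹ * d⁻¹ * (c * a⁻¹ * d⁻¹) 
      _ = c⁻¹ * c⁻¹ * (c * c) * (c * a⁻¹ * d⁻¹ * c * a⁻¹ * d⁻¹) := by group
      _ = c⁻¹ * c⁻¹ * (1) * (c * a⁻¹ * d⁻¹ * c * a⁻¹ * d⁻¹) := by rw [hc]
      _ = c⁻¹ * a⁻¹ * d⁻¹ * c⁻¹ * c⁻¹ * (c * c) * (c * a⁻¹ * d⁻¹) := by group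
      _ = c⁻¹ * a⁻¹ * d⁻¹ * c⁻¹ * c⁻¹ * (1) * (c * a⁻¹ * d⁻¹) := by rw [hc]
      _ = c⁻¹ * c⁻¹ * d⁻¹ * (d * c) * (a⁻¹ * d⁻¹ * c⁻¹ * a⁻¹ * d⁻¹) := by group
      _ = c⁻¹ * c⁻¹ * d⁻¹ * (a * c * d * a) * (a⁻¹ * d⁻¹ * c⁻¹ * a⁻¹ * d⁻¹) := by rw [R9]
      _ = c⁻¹ * c⁻¹ * d * d * (1) * (d⁻¹ * d⁻¹ * d⁻¹ * d⁻¹) := by group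
      _ = c⁻¹ * c⁻¹ * d * d * (d * d) * (d⁻¹ * d⁻¹ * d⁻¹ * d⁻¹) := by rw [hd]
      _ = c * c * (1) * (c⁻¹ * c⁻¹ * c⁻¹ * c⁻¹) := by group
      _ = c * c * (c * c) * (c⁻¹ * c⁻¹ * c⁻¹ * c⁻¹) := by rw [hc]
      _ = 1 := by group

set_option maxHeartbeats 2000000 in
private lemma aux312 {G : Type*} [Group G] (a b c d e : G)
    (R2 : a * d = e * a)
    (R6 : b * a * c⁻¹ * b = a * a * c⁻¹)
    (R9 : a * c * d * a = d * c)
    (R10b : b * d * e * b = e * d)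
    (R11 : d * c * a⁻¹ * d = c * a⁻¹ * c * a⁻¹)
    (R12 : e * d * b⁻¹ * e = d * b⁻¹ * d * b⁻¹)
    (R4 : c * a⁻¹ * d⁻¹ * e = e * (c * a⁻¹ * d⁻¹)) :
    (c * a⁻¹ * d⁻¹ * (d * b⁻¹ * e⁻¹) * a = b * (c * a⁻¹ * d⁻¹)) ∧
    (d * b⁻¹ * e⁻¹ * (c * a⁻¹ * d⁻¹) * b = a * (c * a⁻¹ * d⁻¹)) ∧
    (c * a⁻¹ * d⁻¹ * (d * b⁻¹ * e⁻¹) * (c * a⁻¹ * d⁻¹)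
      = d * b⁻¹ * e⁻¹ * (c * a⁻¹ * d⁻¹) * (d * b⁻¹ * e⁻¹)) ∧
    (c * a⁻¹ * d⁻¹ * d * (c * a⁻¹ * d⁻¹) = d * (c * a⁻¹ * d⁻¹) * d) := by
  have R4' : c * a⁻¹ * d⁻¹ * e = e * c * a⁻¹ * d⁻¹ := by rw [R4]; group
  have P3 : c * a⁻¹ * c * a⁻¹ * d⁻¹ = d * c * a⁻¹ := by
    calc c * a⁻¹ * c * a⁻¹ * d⁻¹ 
      _ = d * c * a⁻¹ * d * a * c⁻¹ * a * c⁻¹ * (c * a⁻¹ * c * a⁻¹) * (d⁻¹ * a * c⁻¹ * d⁻¹ * c * a⁻¹ * c * a⁻¹ * d⁻¹) := by group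
      _ = d * c * a⁻¹ * d * a * c⁻¹ * a * c⁻¹ * (d * c * a⁻¹ * d) * (d⁻¹ * a * c⁻¹ * d⁻¹ * c * a⁻¹ * c * a⁻¹ * d⁻¹) := by rw [R11]
      _ = d * c * a⁻¹ := by group
  have P3b : d * b⁻¹ * d * b⁻¹ * e⁻¹ = e * d * b⁻¹ := by
    calc d * b⁻¹ * d * b⁻¹ * e⁻¹ 
      _ = e * d * b⁻¹ * e * b * d⁻¹ * b * d⁻¹ * (d * b⁻¹ * d * b⁻¹) * (e⁻¹ * b * d⁻¹ * e⁻¹ * d * b⁻¹ * d * b⁻¹ * e⁻¹) := by group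
      _ = e * d * b⁻¹ * e * b * d⁻¹ * b * d⁻¹ * (e * d * b⁻¹ * e) * (e⁻¹ * b * d⁻¹ * e⁻¹ * d * b⁻¹ * d * b⁻¹ * e⁻¹) := by rw [R12]
      _ = e * d * b⁻¹ := by group
  have P1 : c * a⁻¹ * b⁻¹ * e⁻¹ * a = b * c * a⁻¹ * d⁻¹ := by
    calc c * a⁻¹ * b⁻¹ * e⁻¹ * a 
      _ = c * a⁻¹ * b⁻¹ * a * d⁻¹ * a⁻¹ * (a * d) * (a⁻¹ * e⁻¹ * a) := by group
      _ = c * a⁻¹ * b⁻¹ * a * d⁻¹ * a⁻¹ * (e * a) * (a⁻¹ * e⁻¹ * a) := by rw [R2]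
      _ = b * c * a⁻¹ * a⁻¹ * (a * a * c⁻¹) * (b⁻¹ * c * a⁻¹ * b⁻¹ * a * d⁻¹) := by group
      _ = b * c * a⁻¹ * a⁻¹ * (b * a * c⁻¹ * b) * (b⁻¹ * c * a⁻¹ * b⁻¹ * a * d⁻¹) := by rw [R6]
      _ = b * c * a⁻¹ * d⁻¹ := by group
  have P2 : d * b⁻¹ * e⁻¹ * c * a⁻¹ * d⁻¹ * b = a * c * a⁻¹ * d⁻¹ := by
    calc d * b⁻¹ * e⁻¹ * c * a⁻¹ * d⁻¹ * b 
      _ = d * b⁻¹ * c * a⁻¹ * d⁻¹ * e⁻¹ * d * a * c⁻¹ * (c * a⁻¹ * d⁻¹ * e) * (d * a * c⁻¹ * e⁻¹ * c * a⁻¹ * d⁻¹ * b) := by group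
      _ = d * b⁻¹ * c * a⁻¹ * d⁻¹ * e⁻¹ * d * a * c⁻¹ * (e * c * a⁻¹ * d⁻¹) * (d * a * c⁻¹ * e⁻¹ * c * a⁻¹ * d⁻¹ * b) := by rw [R4']
      _ = d * b⁻¹ * c * a⁻¹ * b⁻¹ * e⁻¹ * d⁻¹ * b⁻¹ * (b * d * e * b) * (d⁻¹ * e⁻¹ * b) := by group
      _ = d * b⁻¹ * c * a⁻¹ * b⁻¹ * e⁻¹ * d⁻¹ * b⁻¹ * (e * d) * (d⁻¹ * e⁻¹ * b) := by rw [R10b]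
      _ = d * c * a⁻¹ * a⁻¹ * (a * a * c⁻¹) * (b⁻¹ * c * a⁻¹ * b⁻¹ * e⁻¹ * d⁻¹) := by group
      _ = d * c * a⁻¹ * a⁻¹ * (b * a * c⁻¹ * b) * (b⁻¹ * c * a⁻¹ * b⁻¹ * e⁻¹ * d⁻¹) := by rw [R6]
      _ = a * c * d * a * c⁻¹ * d⁻¹ * (d * c) * (a⁻¹ * d⁻¹ * c⁻¹ * a⁻¹ * d * c * a⁻¹ * a⁻¹ * e⁻¹ * d⁻¹) := by group
      _ = a * c * d * a * c⁻¹ * d⁻¹ * (a * c * d * a) * (a⁻¹ * d⁻¹ * c⁻¹ * a⁻¹ * d * c * a⁻¹ * a⁻¹ * e⁻¹ * d⁻¹) := by rw [R9]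
      _ = a * c * a⁻¹ * (a * d) * (a⁻¹ * e⁻¹ * d⁻¹) := by group
      _ = a * c * a⁻¹ * (e * a) * (a⁻¹ * e⁻¹ * d⁻¹) := by rw [R2]
      _ = a * c * a⁻¹ * d⁻¹ := by group
  have BR : c * a⁻¹ * b⁻¹ * e⁻¹ * c * a⁻¹ * d⁻¹ = d * b⁻¹ * e⁻¹ * c * a⁻¹ * b⁻¹ * e⁻¹ := by
    calc c * a⁻¹ * b⁻¹ * e⁻¹ * c * a⁻¹ * d⁻¹ 
      _ = b * c * a⁻¹ * d⁻¹ * a⁻¹ * e * b * a * c⁻¹ * (c * a⁻¹ * b⁻¹ * e⁻¹ * a) * (d * a * c⁻¹ * b⁻¹ * c * a⁻¹ * b⁻¹ * e⁻¹ * c * a⁻¹ * d⁻¹) := by group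
      _ = b * c * a⁻¹ * d⁻¹ * a⁻¹ * e * b * a * c⁻¹ * (b * c * a⁻¹ * d⁻¹) * (d * a * c⁻¹ * b⁻¹ * c * a⁻¹ * b⁻¹ * e⁻¹ * c * a⁻¹ * d⁻¹) := by rw [P1]
      _ = b * c * a⁻¹ * d⁻¹ * c⁻¹ * (c * a⁻¹ * c * a⁻¹ * d⁻¹) * (1) := by group
      _ = b * c * a⁻¹ * d⁻¹ * c⁻¹ * (d * c * a⁻¹) * (1) := by rw [P3]
      _ = b * d⁻¹ * (d * c) * (a⁻¹ * d⁻¹ * c⁻¹ * d * c * a⁻¹) := by group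
      _ = b * d⁻¹ * (a * c * d * a) * (a⁻¹ * d⁻¹ * c⁻¹ * d * c * a⁻¹) := by rw [R9]
      _ = b * d⁻¹ * e * a * d⁻¹ * a⁻¹ * (a * d) * (a⁻¹ * e⁻¹ * a * d * c * a⁻¹) := by group
      _ = b * d⁻¹ * e * a * d⁻¹ * a⁻¹ * (e * a) * (a⁻¹ * e⁻¹ * a * d * c * a⁻¹) := by rw [R2]
      _ = b * d⁻¹ * e * a * c * d * a⁻¹ * e⁻¹ * (e * a) * (d⁻¹ * a⁻¹) := by group
      _ = b * d⁻¹ * e * a * c * d * a⁻¹ * e⁻¹ * (a * d) * (d⁻¹ * a⁻¹) := by rw [R2]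
      _ = b * d⁻¹ * e * d * c * a⁻¹ * d⁻¹ * c⁻¹ * a⁻¹ * (a * c * d * a) * (c⁻¹ * d⁻¹ * a * c * d * a⁻¹ * e⁻¹) := by group
      _ = b * d⁻¹ * e * d * c * a⁻¹ * d⁻¹ * c⁻¹ * a⁻¹ * (d * c) * (c⁻¹ * d⁻¹ * a * c * d * a⁻¹ * e⁻¹) := by rw [R9]
      _ = d * b⁻¹ * e⁻¹ * b * d⁻¹ * e⁻¹ * (e * d * b⁻¹) * (e * b * d⁻¹ * b * d⁻¹ * e * d * c * a⁻¹ * a⁻¹ * e⁻¹) := by group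
      _ = d * b⁻¹ * e⁻¹ * b * d⁻¹ * e⁻¹ * (d * b⁻¹ * d * b⁻¹ * e⁻¹) * (e * b * d⁻¹ * b * d⁻¹ * e * d * c * a⁻¹ * a⁻¹ * e⁻¹) := by rw [P3b]
      _ = d * b⁻¹ * e⁻¹ * c * a⁻¹ * b⁻¹ * (b * a * c⁻¹ * b) * (c * a⁻¹ * a⁻¹ * e⁻¹) := by group
      _ = d * b⁻¹ * e⁻¹ * c * a⁻¹ * b⁻¹ * (a * a * c⁻¹) * (c * a⁻¹ * a⁻¹ * e⁻¹) := by rw [R6]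
      _ = d * b⁻¹ * e⁻¹ * c * a⁻¹ * b⁻¹ * e⁻¹ := by group
  refine ⟨?_, ?_, ?_, ?_⟩
  · calc c * a⁻¹ * d⁻¹ * (d * b⁻¹ * e⁻¹) * a
      _ = c * a⁻¹ * b⁻¹ * e⁻¹ * a := by group
      _ = b * c * a⁻¹ * d⁻¹ := P1
      _ = b * (c * a⁻¹ * d⁻¹) := by group
  · calc d * b⁻¹ * e⁻¹ * (c * a⁻¹ * d⁻¹) * b
      _ = d * b⁻¹ * e⁻¹ * c * a⁻¹ * d⁻¹ * b := by group
      _ = a * c * a⁻¹ * d⁻¹ := P2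
      _ = a * (c * a⁻¹ * d⁻¹) := by group
  · calc c * a⁻¹ * d⁻¹ * (d * b⁻¹ * e⁻¹) * (c * a⁻¹ * d⁻¹)
      _ = c * a⁻¹ * b⁻¹ * e⁻¹ * c * a⁻¹ * d⁻¹ := by group
      _ = d * b⁻¹ * e⁻¹ * c * a⁻¹ * b⁻¹ * e⁻¹ := BR
      _ = d * b⁻¹ * e⁻¹ * (c * a⁻¹ * d⁻¹) * (d * b⁻¹ * e⁻¹) := by group
  · calc c * a⁻¹ * d⁻¹ * d * (c * a⁻¹ * d⁻¹)
      _ = c * a⁻¹ * c * a⁻¹ * d⁻¹ := by group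
      _ = d * c * a⁻¹ := P3
      _ = d * (c * a⁻¹ * d⁻¹) * d := by group

/-- Lemma 3.12: if elements `a_i, c_i` (`i ≥ 1`) of a group `G` satisfy the
relations `R_ac`, then, setting `s_i = c_i·a_i⁻¹·c_{i+1}⁻¹`, all relations of
`R_acs` hold in `G`; moreover, if in addition `c_i² = 1` holds for all `i`, then
`s_i² = 1` holds for all `i`. -/
theorem stmt13 {G : Type*} [Group G] (a c : ℕ → G)
    -- R_ac, relations (3.6):
    (h36a : ∀ i j : ℕ, 1 ≤ i → i + 2 ≤ j → a i * a (j - 1) = a j * a i)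
    (h36c : ∀ i j : ℕ, 1 ≤ i → i + 2 ≤ j → a i * c (j - 1) = c j * a i)
    -- R_ac, relations (3.7):
    (h37a : ∀ i j : ℕ, 1 ≤ i → i + 2 ≤ j →
      (c i * (a i)⁻¹ * (c (i + 1))⁻¹) * a j = a j * (c i * (a i)⁻¹ * (c (i + 1))⁻¹))
    (h37c : ∀ i j : ℕ, 1 ≤ i → i + 2 ≤ j →
      (c i * (a i)⁻¹ * (c (i + 1))⁻¹) * c j = c j * (c i * (a i)⁻¹ * (c (i + 1))⁻¹))
    -- R_ac, relations (3.8) for e = 1 and e = -1: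
    (h38p : ∀ i : ℕ, 1 ≤ i → a (i + 1) * a i * c i * a (i + 1) = a i * a i * c i)
    (h38m : ∀ i : ℕ, 1 ≤ i →
      a (i + 1) * a i * (c i)⁻¹ * a (i + 1) = a i * a i * (c i)⁻¹)
    -- R_ac, relation (3.9):
    (h39 : ∀ i : ℕ, 1 ≤ i → a i * c i * c (i + 1) * a i = c (i + 1) * c i)
    -- R_ac, relation (3.10):
    (h310 : ∀ i : ℕ, 1 ≤ i →
      c (i + 1) * c i * (a i)⁻¹ * c (i + 1) = c i * (a i)⁻¹ * c i * (a i)⁻¹)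
    -- `s_i = c_i·a_i⁻¹·c_{i+1}⁻¹`:
    (s : ℕ → G) (hs : ∀ i : ℕ, s i = c i * (a i)⁻¹ * (c (i + 1))⁻¹) :
    -- R_acs, relations (3.15):
    (∀ i j : ℕ, 1 ≤ i → i + 2 ≤ j →
      a i * a (j - 1) = a j * a i ∧ a i * c (j - 1) = c j * a i ∧
      a i * s (j - 1) = s j * a i) ∧
    -- R_acs, relations (3.16):
    (∀ i j : ℕ, 1 ≤ i → i + 2 ≤ j →
      s i * a j = a j * s i ∧ s i * c j = c j * s i ∧ s i * s j = s j * s i) ∧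
    -- R_acs, relations (3.17):
    (∀ i : ℕ, 1 ≤ i →
      s i * s (i + 1) * a i = a (i + 1) * s i ∧
      s (i + 1) * s i * a (i + 1) = a i * s i) ∧
    -- R_acs, relations (3.18):
    (∀ i : ℕ, 1 ≤ i →
      s i * s (i + 1) * s i = s (i + 1) * s i * s (i + 1) ∧
      s i * c (i + 1) * s i = c (i + 1) * s i * c (i + 1)) ∧
    -- torsion:
    ((∀ i : ℕ, 1 ≤ i → c i * c i = 1) → ∀ i : ℕ, 1 ≤ i → s i * s i = 1) := by
  refine ⟨?_, ?_, ?_, ?_, ?_⟩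
  · intro i j hi hij
    refine ⟨h36a i j hi hij, h36c i j hi hij, ?_⟩
    obtain ⟨k, rfl⟩ : ∃ k, j = k + 1 := ⟨j - 1, by omega⟩
    simp only [Nat.add_sub_cancel]
    rw [hs k, hs (k + 1)]
    exact comm3' (a i) (a k) (a (k + 1)) (c k) (c (k + 1)) (c (k + 2))
      (h36a i (k + 1) hi hij) (h36c i (k + 1) hi hij) (h36c i (k + 2) hi (by omega))
  · intro i j hi hij
    refine ⟨?_, ?_, ?_⟩
    · rw [hs i]; exact h37a i j hi hij
    · rw [hs i]; exact h37c i j hi hij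
    rw [hs i, hs j]
    exact comm2' (c i * (a i)⁻¹ * (c (i + 1))⁻¹) (a j) (c j) (c (j + 1))
      (h37a i j hi hij) (h37c i j hi hij) (h37c i (j + 1) hi (by omega))
  · intro i hi
    have H := aux312 (a i) (a (i + 1)) (c i) (c (i + 1)) (c (i + 2))
      (h36c i (i + 2) hi (by omega)) (h38m i hi) (h39 i hi) (h39 (i + 1) (by omega))
      (h310 i hi) (h310 (i + 1) (by omega)) (h37c i (i + 2) hi (by omega))
    constructor
    · rw [hs i, hs (i + 1)]; exact H.1
    · rw [hs i, hs (i + 1)]; exact H.2.1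
  · intro i hi
    have H := aux312 (a i) (a (i + 1)) (c i) (c (i + 1)) (c (i + 2))
      (h36c i (i + 2) hi (by omega)) (h38m i hi) (h39 i hi) (h39 (i + 1) (by omega))
      (h310 i hi) (h310 (i + 1) (by omega)) (h37c i (i + 2) hi (by omega))
    constructor
    · rw [hs i, hs (i + 1)]; exact H.2.2.1
    · rw [hs i]; exact H.2.2.2
  · intro hc i hi
    rw [hs i]
    exact torsionAux (a i) (c i) (c (i + 1)) (h39 i hi) (hc i hi) (hc (i + 1) (by omega))
end

section
/- Let the set of coloured trees be equipped with an arbitrary binary operation (t₁, t₂) ↦ t₁[t₂], and let S^T be the partial operator mapping each tree of the form t₁·(t₂·t₃) to t₁[t₂]·(t₁·t₃), with S^T₁ = ∂₁S^T and A₁ = ∂₁A. Then the near-equalities A₁·S^T ≈ S^T·S^T₁·A, A·S^T ≈ S^T₁·S^T·A₁, and S^T·S^T₁·S^T ≈ S^T₁·S^T·S^T₁ (products meaning 'left factor applied first') hold if and only if, for all coloured trees t₁, t₂, t₃: t₁[t₂·t₃] = t₁[t₂]·t₁[t₃], (t₁·t₂)[t₃] = t₁[t₂[t₃]], and t₁[t₂[t₃]]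 = t₁[t₂][t₁[t₃]]. -/
/-- Coloured trees: finite rooted binary trees whose leaves are labelled by
positive integers. -/
inductive CTree : Type
  | leaf : ℕ+ → CTree
  | node : CTree → CTree → CTree

/-- Partial maps on coloured trees, as a monoid under reversed composition:
`(f * g) t = (f t).bind g`, i.e. `f * g` means "`f` then `g`". -/
abbrev PMap : Type := CTree → Option CTree

instance : Monoid PMap where
  one := fun t => some t
  mul f g := fun t => (f t).bind g
  mul_assoc f g h := by
    funext t
    show ((f t).bind g).bind h = (f t).bind fun u => (g u).bind h
    cases f t <;> rfl
  one_mul f := rfl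
  mul_one f := by
    funext t
    show (f t).bind some = f t
    cases f t <;> rfl

/-- The associativity operator `A`: maps `t₁·(t₂·t₃)` to `(t₁·t₂)·t₃`. -/
def opA : PMap
  | .node t₁ (.node t₂ t₃) => some (.node (.node t₁ t₂) t₃)
  | _ => none

/-- The inverse partial map of `A`: maps `(t₁·t₂)·t₃` to `t₁·(t₂·t₃)`. -/
def opAi : PMap
  | .node (.node t₁ t₂) t₃ => some (.node t₁ (.node t₂ t₃))
  | _ => none

/-- The commutativity operator `C`: maps `t₁·t₂` to `t₂·t₁` (its own inverse
as a partial map). -/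
def opC : PMap
  | .node t₁ t₂ => some (.node t₂ t₁)
  | _ => none

/-- The semi-commutativity operator `S`: maps `t₁·(t₂·t₃)` to `t₂·(t₁·t₃)`
(its own inverse as a partial map). -/
def opS : PMap
  | .node t₁ (.node t₂ t₃) => some (.node t₂ (.node t₁ t₃))
  | _ => none

/-- Addresses: finite words over `{0,1}`, with `false` = 0 (left) and `true` = 1
(right). -/
abbrev Addr := List Bool

/-- `applyAt α f` is the shifted operator `∂_α f`, applying `f` to the
`α`-subtree of its argument. -/
def applyAt : Addr → PMap → PMap
  | [], f => f
  | false :: α, f => fun t => match t with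
      | .node t₁ t₂ => (applyAt α f t₁).map (fun s => .node s t₂)
      | _ => none
  | true :: α, f => fun t => match t with
      | .node t₁ t₂ => (applyAt α f t₂).map (fun s => .node t₁ s)
      | _ => none

/-- Two partial maps are near-equal if they are both defined on at least one common
element, and they agree wherever both are defined. -/
def NearEq (f g : PMap) : Prop :=
  (∃ t, (f t).isSome ∧ (g t).isSome) ∧
  ∀ t, (f t).isSome → (g t).isSome → f t = g t

/-- The twisted semi-commutation operator `S^T` associated with a binary (bracket)
operation on coloured trees: it maps `t₁·(t₂·t₃)` to `t₁[t₂]·(t₁·t₃)`. -/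
def opST (op : CTree → CTree → CTree) : PMap
  | .node t₁ (.node t₂ t₃) => some (.node (op t₁ t₂) (.node t₁ t₃))
  | _ => none

section Aux

variable (op : CTree → CTree → CTree)

lemma f1_eq (t₁ t₂ t₃ t₄ : CTree) :
    (applyAt [true] opA * opST op) (.node t₁ (.node t₂ (.node t₃ t₄))) =
      some (.node (op t₁ (.node t₂ t₃)) (.node t₁ t₄)) := rfl

lemma g1_eq (t₁ t₂ t₃ t₄ : CTree) :
    (opST op * applyAt [true] (opST op) * opA) (.node t₁ (.node t₂ (.node t₃ t₄))) =
      some (.node (.node (op t₁ t₂) (op t₁ t₃)) (.node t₁ t₄)) := rfl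

lemma f2_eq (t₁ t₂ t₃ t₄ : CTree) :
    (opA * opST op) (.node t₁ (.node t₂ (.node t₃ t₄))) =
      some (.node (op (.node t₁ t₂) t₃) (.node (.node t₁ t₂) t₄)) := rfl

lemma g2_eq (t₁ t₂ t₃ t₄ : CTree) :
    (applyAt [true] (opST op) * opST op * applyAt [true] opA)
        (.node t₁ (.node t₂ (.node t₃ t₄))) =
      some (.node (op t₁ (op t₂ t₃)) (.node (.node t₁ t₂) t₄)) := rfl

lemma f3_eq (t₁ t₂ t₃ t₄ : CTree) :
    (opST op * applyAt [true] (opST op) * opST op) (.node t₁ (.node t₂ (.node t₃ t₄))) =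
      some (.node (op (op t₁ t₂) (op t₁ t₃)) (.node (op t₁ t₂) (.node t₁ t₄))) := rfl

lemma g3_eq (t₁ t₂ t₃ t₄ : CTree) :
    (applyAt [true] (opST op) * opST op * applyAt [true] (opST op))
        (.node t₁ (.node t₂ (.node t₃ t₄))) =
      some (.node (op t₁ (op t₂ t₃)) (.node (op t₁ t₂) (.node t₁ t₄))) := rfl

end Aux

/-- Proposition 5.3 (i): for any binary operation `t₁,t₂ ↦ t₁[t₂]` on coloured
trees, the near-equalities `A₁·S^T ≈ S^T·S^T₁·A`, `A·S^T ≈ S^T₁·S^T·A₁`, and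
`S^T·S^T₁·S^T ≈ S^T₁·S^T·S^T₁` (products meaning "left factor applied first") hold
if and only if, for all coloured trees `t₁, t₂, t₃`:
`t₁[t₂·t₃] = t₁[t₂]·t₁[t₃]`, `(t₁·t₂)[t₃] = t₁[t₂[t₃]]`, and
`t₁[t₂[t₃]] = t₁[t₂][t₁[t₃]]`. -/
theorem stmt18 (op : CTree → CTree → CTree) :
    (NearEq (applyAt [true] opA * opST op) (opST op * applyAt [true] (opST op) * opA) ∧
     NearEq (opA * opST op) (applyAt [true] (opST op) * opST op * applyAt [true] opA) ∧
     NearEq (opST op * applyAt [true] (opST op) * opST op)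
            (applyAt [true] (opST op) * opST op * applyAt [true] (opST op))) ↔
    (∀ t₁ t₂ t₃ : CTree,
      op t₁ (.node t₂ t₃) = .node (op t₁ t₂) (op t₁ t₃) ∧
      op (.node t₁ t₂) t₃ = op t₁ (op t₂ t₃) ∧
      op t₁ (op t₂ t₃) = op (op t₁ t₂) (op t₁ t₃)) := by
  constructor
  · rintro ⟨h1, h2, h3⟩ t₁ t₂ t₃
    refine ⟨?_, ?_, ?_⟩
    · have := h1.2 (.node t₁ (.node t₂ (.node t₃ (.leaf 1)))) rfl rfl
      rw [f1_eq, g1_eq] at this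
      exact (CTree.node.injEq .. ▸ Option.some.injEq .. ▸ this).1
    · have := h2.2 (.node t₁ (.node t₂ (.node t₃ (.leaf 1)))) rfl rfl
      rw [f2_eq, g2_eq] at this
      exact (CTree.node.injEq .. ▸ Option.some.injEq .. ▸ this).1
    · have := h3.2 (.node t₁ (.node t₂ (.node t₃ (.leaf 1)))) rfl rfl
      rw [f3_eq, g3_eq] at this
      exact ((CTree.node.injEq .. ▸ Option.some.injEq .. ▸ this).1).symm
  · intro h
    have e1 : ∀ t, (applyAt [true] opA * opST op) t =
        (opST op * applyAt [true] (opST op) * opA) t := by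
      intro t
      obtain _ | ⟨a, _ | ⟨b, _ | ⟨c, d⟩⟩⟩ := t
      · rfl
      · rfl
      · rfl
      · rw [f1_eq, g1_eq, (h a b c).1]
    have e2 : ∀ t, (opA * opST op) t =
        (applyAt [true] (opST op) * opST op * applyAt [true] opA) t := by
      intro t
      obtain _ | ⟨a, _ | ⟨b, _ | ⟨c, d⟩⟩⟩ := t
      · rfl
      · rfl
      · rfl
      · rw [f2_eq, g2_eq, (h a b c).2.1]
    have e3 : ∀ t, (opST op * applyAt [true] (opST op) * opST op) t =
        (applyAt [true] (opST op) * opST op * applyAt [true] (opST op)) t := by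
      intro t
      obtain _ | ⟨a, _ | ⟨b, _ | ⟨c, d⟩⟩⟩ := t
      · rfl
      · rfl
      · rfl
      · rw [f3_eq, g3_eq, (h a b c).2.2]
    exact ⟨⟨⟨.node (.leaf 1) (.node (.leaf 1) (.node (.leaf 1) (.leaf 1))), rfl, rfl⟩,
        fun t _ _ => e1 t⟩,
      ⟨⟨.node (.leaf 1) (.node (.leaf 1) (.node (.leaf 1) (.leaf 1))), rfl, rfl⟩,
        fun t _ _ => e2 t⟩,
      ⟨⟨.node (.leaf 1) (.node (.leaf 1) (.node (.leaf 1) (.leaf 1))), rfl, rfl⟩,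
        fun t _ _ => e3 t⟩⟩
end
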